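/- Let E be a real inner product space, λ ∈ ℝ, and f : E → ℝ a λ-concave Fréchet differentiable function. Let α, β : [0, ∞) → E be two f-gradient curves. Then for all t ≥ 0, ‖α(t) − β(t)‖ ≤ e^{λ·t}·‖α(0) − β(0)‖. -/

import Mathlib

open scoped RealInnerProductSpace

open Set

/-- Tangent-line inequality for concave functions on the whole space. -/
lemma concave_tangent_le {E : Type*} [NormedAddCommGroup E] [InnerProductSpace ℝ E]
    {φ : E → ℝ} (h : ConcaveOn ℝ Set.univ φ)
    {x y : E} {φ' : E →L[ℝ] ℝ} (hd : HasFDerivAt φ φ' x) :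
    φ y ≤ φ x + φ' (y - x) := by
  set L : ℝ →ᵃ[ℝ] E := AffineMap.lineMap x y with hLdef
  have hL0 : L 0 = x := AffineMap.lineMap_apply_zero x y
  have hL1 : L 1 = y := AffineMap.lineMap_apply_one x y
  have hcomp : ConcaveOn ℝ Set.univ (φ ∘ L) := by
    have := h.comp_affineMap L
    simpa using this
  have hLd : HasDerivAt (fun t : ℝ => L t) (y - x) 0 := by
    have : (fun t : ℝ => L t) = fun t : ℝ => t • (y - x) + x := by
      funext t
      simp [hLdef, AffineMap.lineMap_apply, vsub_eq_sub, vadd_eq_add]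
    rw [this]
    simpa using ((hasDerivAt_id (0:ℝ)).smul_const (y - x)).add_const x
  have hd' : HasFDerivAt φ φ' (L 0) := by rwa [hL0]
  have hD : HasDerivAt (φ ∘ L) (φ' (y - x)) 0 := by
    simpa using hd'.comp_hasDerivAt 0 hLd
  have hneg : ConvexOn ℝ Set.univ (-(φ ∘ L)) := hcomp.neg
  have hs := hneg.le_slope_of_hasDerivAt (Set.mem_univ (0:ℝ)) (Set.mem_univ (1:ℝ))
      zero_lt_one hD.neg
  have : -(φ' (y - x)) ≤ (-(φ ∘ L)) 1 - (-(φ ∘ L)) 0 := by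
    have := hs
    rw [slope_def_field] at this
    simpa using this
  simp only [Pi.neg_apply, Function.comp_apply, hL0, hL1] at this
  linarith

/-- Monotonicity of the gradient of a λ-concave function. -/
lemma grad_mono {E : Type*} [NormedAddCommGroup E] [InnerProductSpace ℝ E]
    (lam : ℝ) (f : E → ℝ) (g : E → E)
    (hconc : ConcaveOn ℝ Set.univ (fun x => f x - lam / 2 * ‖x‖ ^ 2))
    (hg : ∀ x, HasFDerivAt f (innerSL ℝ (g x)) x) (x y : E) :
    ⟪g x - g y, x - y⟫ ≤ lam * ‖x - y‖ ^ 2 := by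
  have hsq : ∀ z : E, HasFDerivAt (fun w : E => lam / 2 * ‖w‖ ^ 2)
      (innerSL ℝ (lam • z)) z := by
    intro z
    have h1 : HasFDerivAt (fun w : E => ⟪w, w⟫)
        ((fderivInnerCLM ℝ (z, z)).comp
          ((ContinuousLinearMap.id ℝ E).prod (ContinuousLinearMap.id ℝ E))) z :=
      (hasFDerivAt_id z).inner ℝ (hasFDerivAt_id z)
    have h2 : HasFDerivAt (fun w : E => lam / 2 * ⟪w, w⟫)
        ((lam / 2) • ((fderivInnerCLM ℝ (z, z)).comp
          ((ContinuousLinearMap.id ℝ E).prod (ContinuousLinearMap.id ℝ E)))) z :=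
      h1.const_smul (lam / 2)
    have heq : (fun w : E => lam / 2 * ⟪w, w⟫) = fun w : E => lam / 2 * ‖w‖ ^ 2 := by
      funext w; rw [real_inner_self_eq_norm_sq]
    rw [heq] at h2
    refine h2.congr_fderiv ?_
    apply ContinuousLinearMap.ext
    intro v
    simp [fderivInnerCLM_apply, real_inner_smul_left, real_inner_comm]
    ring
  have hφ : ∀ z : E, HasFDerivAt (fun w => f w - lam / 2 * ‖w‖ ^ 2)
      (innerSL ℝ (g z) - innerSL ℝ (lam • z)) z := fun z => (hg z).sub (hsq z)
  have h1 := concave_tangent_le hconc (hφ x) (y := y)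
  have h2 := concave_tangent_le hconc (hφ y) (y := x)
  simp only [ContinuousLinearMap.sub_apply, innerSL_apply_apply] at h1 h2
  have hx1 : ⟪lam • x, y - x⟫ = lam * ⟪x, y - x⟫ := real_inner_smul_left _ _ _
  have hx2 : ⟪lam • y, x - y⟫ = lam * ⟪y, x - y⟫ := real_inner_smul_left _ _ _
  have e1 : ⟪g x - g y, x - y⟫ = ⟪g x, x - y⟫ - ⟪g y, x - y⟫ := inner_sub_left _ _ _
  have e2 : ⟪g x, y - x⟫ = -⟪g x, x - y⟫ := by
    rw [show y - x = -(x - y) by abel, inner_neg_right]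
  have e3 : ⟪x, y - x⟫ + ⟪y, x - y⟫ = -⟪x - y, x - y⟫ := by
    rw [show y - x = -(x - y) by abel, inner_neg_right, inner_sub_left]
    ring
  have e4 : ⟪x - y, x - y⟫ = ‖x - y‖ ^ 2 := real_inner_self_eq_norm_sq _
  have e5 : lam * (⟪x, y - x⟫ + ⟪y, x - y⟫) = -(lam * ⟪x - y, x - y⟫) := by
    rw [e3]; ring
  have e6 : lam * ⟪x - y, x - y⟫ = lam * ‖x - y‖ ^ 2 := by rw [e4]
  linarith [h1, h2, hx1, hx2, e1, e2, e5, e6]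

/-- Gradient curves of a λ-concave function diverge at most at rate `e^{λ t}`
(linear model of Lemma 2.4 (i)). -/
theorem gradient_curves_dist_est
    {E : Type*} [NormedAddCommGroup E] [InnerProductSpace ℝ E]
    (lam : ℝ) (f : E → ℝ) (g : E → E)
    (hconc : ConcaveOn ℝ Set.univ (fun x => f x - lam / 2 * ‖x‖ ^ 2))
    (hg : ∀ x, HasFDerivAt f (innerSL ℝ (g x)) x)
    (α β : ℝ → E)
    (hα : ∀ t ∈ Set.Ici (0 : ℝ), HasDerivWithinAt α (g (α t)) (Set.Ici 0) t)
    (hβ : ∀ t ∈ Set.Ici (0 : ℝ), HasDerivWithinAt β (g (β t)) (Set.Ici 0) t) :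
    ∀ t ≥ (0 : ℝ), ‖α t - β t‖ ≤ Real.exp (lam * t) * ‖α 0 - β 0‖ := by
  intro T hT
  set w : ℝ → E := fun t => α t - β t with hw
  set h : ℝ → ℝ := fun t => ⟪w t, w t⟫ with hhdef
  -- derivative of h
  have hwd : ∀ t ∈ Set.Ici (0:ℝ),
      HasDerivWithinAt w (g (α t) - g (β t)) (Set.Ici 0) t :=
    fun t ht => (hα t ht).sub (hβ t ht)
  have hhd : ∀ t ∈ Set.Ici (0:ℝ),
      HasDerivWithinAt h (2 * ⟪g (α t) - g (β t), w t⟫) (Set.Ici 0) t := by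
    intro t ht
    have := (hwd t ht).inner ℝ (hwd t ht)
    have heq : ⟪w t, g (α t) - g (β t)⟫ + ⟪g (α t) - g (β t), w t⟫
        = 2 * ⟪g (α t) - g (β t), w t⟫ := by
      rw [real_inner_comm (w t)]; ring
    rwa [heq] at this
  have hbound : ∀ t ∈ Set.Ici (0:ℝ),
      2 * ⟪g (α t) - g (β t), w t⟫ ≤ (2 * lam) * h t + 0 := by
    intro t _
    have := grad_mono lam f g hconc hg (α t) (β t)
    have he : h t = ‖α t - β t‖ ^ 2 := real_inner_self_eq_norm_sq _
    rw [he]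
    simp only [hw]
    nlinarith
  have hcont : ContinuousOn h (Set.Icc 0 T) := by
    intro t ht
    exact ((hhd t (Set.mem_Ici.mpr ht.1)).continuousWithinAt).mono (fun z hz => hz.1)
  have key := le_gronwallBound_of_liminf_deriv_right_le
      (f := h) (f' := fun t => 2 * ⟪g (α t) - g (β t), w t⟫)
      (δ := h 0) (K := 2 * lam) (ε := 0) (a := 0) (b := T)
      hcont
      (by
        intro x hx r hr
        have hd : HasDerivWithinAt h (2 * ⟪g (α x) - g (β x), w x⟫) (Set.Ici x) x :=
          (hhd x (Set.mem_Ici.mpr hx.1)).mono (Set.Ici_subset_Ici.2 hx.1)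
        have := hd.liminf_right_slope_le hr
        refine this.mono fun z hz => ?_
        rwa [slope_def_field, div_eq_inv_mul] at hz)
      le_rfl
      (fun x hx => hbound x (Set.mem_Ici.mpr hx.1))
  have hT' := key T ⟨hT, le_refl _⟩
  rw [gronwallBound_ε0, sub_zero] at hT'
  -- Now h T ≤ h 0 * exp (2 lam T)
  have e0 : h 0 = ‖α 0 - β 0‖ ^ 2 := real_inner_self_eq_norm_sq _
  have eT : h T = ‖α T - β T‖ ^ 2 := real_inner_self_eq_norm_sq _
  have hexp : Real.exp (2 * lam * T) = (Real.exp (lam * T)) ^ 2 := by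
    rw [← Real.exp_nat_mul]
    ring_nf
  rw [e0, eT, hexp] at hT'
  have h1 : (0:ℝ) ≤ Real.exp (lam * T) * ‖α 0 - β 0‖ :=
    mul_nonneg (Real.exp_nonneg _) (norm_nonneg _)
  nlinarith [norm_nonneg (α T - β T), hT']
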